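/- Fix d > 0 and s > 0. Define b(M) = (1/M)·( Σ_{n=1}^{M} 1/√(d² + ((n − 1/2)·s)²) )² for positive integers M. Then there exists a positive integer M* such that b(M) ≤ b(M*) for all positive integers M. -/

import Mathlib

open Finset

private lemma sum_inv_sqrt_le (M : ℕ) :
    ∑ n ∈ Finset.Icc 1 M, 1 / Real.sqrt n ≤ 2 * Real.sqrt M := by
  induction M with
  | zero => simp
  | succ M ih =>
    rw [Finset.sum_Icc_succ_top (by omega)]
    have ha0 : (0:ℝ) ≤ (M:ℝ) := Nat.cast_nonneg M
    set a := Real.sqrt (M:ℝ) with ha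
    set b := Real.sqrt ((M:ℝ)+1) with hb
    have hbpos : 0 < b := Real.sqrt_pos.2 (by linarith)
    have hab : a ≤ b := Real.sqrt_le_sqrt (by linarith)
    have han : 0 ≤ a := Real.sqrt_nonneg _
    have hsq : b^2 = a^2 + 1 := by
      rw [ha, hb, Real.sq_sqrt (by linarith), Real.sq_sqrt ha0]
    have key : 1 / b ≤ 2*b - 2*a := by
      rw [div_le_iff₀ hbpos]; nlinarith
    have hc : ((M+1 : ℕ) : ℝ) = (M:ℝ) + 1 := by push_cast; ring
    rw [hc]
    linarith

private lemma sum_inv_npow_le (M : ℕ) (hM : 1 ≤ M) :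
    ∑ n ∈ Finset.Icc 1 M, 1 / ((n:ℝ) * Real.sqrt n) ≤ 3 - 2 / Real.sqrt M := by
  induction M, hM using Nat.le_induction with
  | base => norm_num
  | succ M hM ih =>
    rw [Finset.sum_Icc_succ_top (by omega)]
    have ha0 : (1:ℝ) ≤ (M:ℝ) := by exact_mod_cast hM
    set a := Real.sqrt (M:ℝ) with ha
    set b := Real.sqrt ((M:ℝ)+1) with hb
    have hapos : 0 < a := Real.sqrt_pos.2 (by linarith)
    have hbpos : 0 < b := Real.sqrt_pos.2 (by linarith)
    have hab : a ≤ b := Real.sqrt_le_sqrt (by linarith)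
    have hsq : b^2 = a^2 + 1 := by
      rw [ha, hb, Real.sq_sqrt (by linarith), Real.sq_sqrt (by linarith)]
    have hbsq : ((M:ℝ)+1) = b^2 := by
      rw [hb, Real.sq_sqrt (by linarith)]
    have hc : ((M+1 : ℕ) : ℝ) = (M:ℝ) + 1 := by push_cast; ring
    have h7 : (b - a) * (b + a) = 1 := by linear_combination hsq
    have e1 : a^2 * b ≤ b^3 := by nlinarith
    have e2 : a * b^2 ≤ b^3 := by nlinarith
    have key : 1 / (((M:ℝ)+1) * b) ≤ 2 / a - 2 / b := by
      rw [hbsq, div_sub_div _ _ (ne_of_gt hapos) (ne_of_gt hbpos),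
        div_le_div_iff₀ (by positivity) (by positivity)]
      nlinarith [add_pos hapos hbpos, mul_pos hapos hbpos]
    rw [hc]
    linarith

private lemma key_bound (d s : ℝ) (hd : 0 < d) (hs : 0 < s) (M : ℕ) (hM : 0 < M) :
    (∑ n ∈ Finset.Icc 1 M,
        1 / Real.sqrt (d ^ 2 + (((n : ℝ) - 1 / 2) * s) ^ 2)) ^ 2 ≤
      (24 / s ^ 2) * Real.sqrt M := by
  set f : ℕ → ℝ := fun n => 1 / Real.sqrt (d ^ 2 + (((n : ℝ) - 1 / 2) * s) ^ 2) with hf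
  have hrw : ∀ n ∈ Finset.Icc 1 M,
      f n = (1 / Real.sqrt (Real.sqrt n)) * (Real.sqrt (Real.sqrt n) * f n) := by
    intro n hn
    have hn1 : 1 ≤ n := (Finset.mem_Icc.mp hn).1
    have h1 : (0:ℝ) < Real.sqrt (Real.sqrt n) := by
      apply Real.sqrt_pos.2; apply Real.sqrt_pos.2
      exact_mod_cast Nat.cast_pos.2 hn1
    field_simp
  have hB : ∀ n ∈ Finset.Icc 1 M,
      (Real.sqrt (Real.sqrt n) * f n) ^ 2 ≤ (4 / s^2) * (1 / ((n:ℝ) * Real.sqrt n)) := by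
    intro n hn
    have hn1 : 1 ≤ n := (Finset.mem_Icc.mp hn).1
    have h0 : (1:ℝ) ≤ (n:ℝ) := by exact_mod_cast hn1
    have hnpos : (0:ℝ) < (n:ℝ) := by linarith
    have hsn : (0:ℝ) < Real.sqrt n := Real.sqrt_pos.2 hnpos
    have h2 : Real.sqrt n * Real.sqrt n = (n:ℝ) := Real.mul_self_sqrt hnpos.le
    have hxpos : (0:ℝ) < ((n:ℝ) - 1/2) * s := by nlinarith
    have hx : ((n:ℝ) - 1/2) * s ≤ Real.sqrt (d ^ 2 + (((n : ℝ) - 1 / 2) * s) ^ 2) := by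
      calc ((n:ℝ) - 1/2) * s = Real.sqrt ((((n:ℝ) - 1/2) * s)^2) := (Real.sqrt_sq hxpos.le).symm
        _ ≤ _ := Real.sqrt_le_sqrt (by nlinarith)
    have hfb : f n ≤ 2 / ((n:ℝ) * s) := by
      have step1 : f n ≤ 1 / (((n:ℝ) - 1/2) * s) := by
        rw [hf]
        exact one_div_le_one_div_of_le hxpos hx
      refine step1.trans ?_
      rw [div_le_div_iff₀ hxpos (by positivity)]
      nlinarith
    have hfnn : 0 ≤ f n := by rw [hf]; positivity
    have hsqn : Real.sqrt (Real.sqrt n) ^ 2 = Real.sqrt n := Real.sq_sqrt (Real.sqrt_nonneg _)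
    have hsq2 : (Real.sqrt (Real.sqrt n) * f n) ^ 2 = Real.sqrt n * f n ^ 2 := by
      rw [mul_pow, hsqn]
    rw [hsq2]
    have h3 : f n ^ 2 ≤ (2 / ((n:ℝ) * s))^2 := pow_le_pow_left₀ hfnn hfb 2
    have h4 : Real.sqrt n * f n ^ 2 ≤ Real.sqrt n * (2 / ((n:ℝ) * s))^2 :=
      mul_le_mul_of_nonneg_left h3 (Real.sqrt_nonneg _)
    refine h4.trans (le_of_eq ?_)
    have h9 : Real.sqrt n / (n:ℝ)^2 = 1/((n:ℝ) * Real.sqrt n) := by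
      rw [div_eq_div_iff (by positivity) (by positivity)]
      linear_combination (n:ℝ) * h2
    calc Real.sqrt n * (2 / ((n:ℝ) * s))^2 = (4/s^2) * (Real.sqrt n / (n:ℝ)^2) := by
          field_simp; ring
      _ = (4/s^2) * (1/((n:ℝ) * Real.sqrt n)) := by rw [h9]
  calc (∑ n ∈ Finset.Icc 1 M, f n) ^ 2
      = (∑ n ∈ Finset.Icc 1 M,
          (1 / Real.sqrt (Real.sqrt n)) * (Real.sqrt (Real.sqrt n) * f n)) ^ 2 := by
        rw [Finset.sum_congr rfl hrw]
    _ ≤ (∑ n ∈ Finset.Icc 1 M, (1 / Real.sqrt (Real.sqrt n)) ^ 2) *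
        (∑ n ∈ Finset.Icc 1 M, (Real.sqrt (Real.sqrt n) * f n) ^ 2) :=
        Finset.sum_mul_sq_le_sq_mul_sq _ _ _
    _ ≤ (2 * Real.sqrt M) * (12 / s ^ 2) := by
        apply mul_le_mul
        · refine (Finset.sum_le_sum ?_).trans (sum_inv_sqrt_le M)
          intro n hn
          rw [div_pow, one_pow, Real.sq_sqrt (Real.sqrt_nonneg _)]
        · refine (Finset.sum_le_sum hB).trans ?_
          rw [← Finset.mul_sum]
          have h5 : ∑ n ∈ Finset.Icc 1 M, 1 / ((n:ℝ) * Real.sqrt n) ≤ 3 := by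
            have h6 := sum_inv_npow_le M hM
            have : 0 ≤ 2 / Real.sqrt M := by positivity
            linarith
          calc (4/s^2) * ∑ n ∈ Finset.Icc 1 M, 1 / ((n:ℝ) * Real.sqrt n)
              ≤ (4/s^2) * 3 := mul_le_mul_of_nonneg_left h5 (by positivity)
            _ = 12 / s^2 := by ring
        · apply Finset.sum_nonneg; intro n hn; positivity
        · positivity
    _ = (24 / s ^ 2) * Real.sqrt M := by ring

/-- Remark 1: there exists an optimal number of antennas maximizing `b(M)`. -/
theorem discrete_bound_attains_max (d s : ℝ) (hd : 0 < d) (hs : 0 < s) :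
    ∃ Mstar : ℕ, 0 < Mstar ∧
      ∀ M : ℕ, 0 < M →
        (1 / (M : ℝ)) *
            (∑ n ∈ Finset.Icc 1 M,
              1 / Real.sqrt (d ^ 2 + (((n : ℝ) - 1 / 2) * s) ^ 2)) ^ 2 ≤
          (1 / (Mstar : ℝ)) *
            (∑ n ∈ Finset.Icc 1 Mstar,
              1 / Real.sqrt (d ^ 2 + (((n : ℝ) - 1 / 2) * s) ^ 2)) ^ 2 := by
  set g : ℕ → ℝ := fun M =>
    (1 / (M : ℝ)) *
      (∑ n ∈ Finset.Icc 1 M,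
        1 / Real.sqrt (d ^ 2 + (((n : ℝ) - 1 / 2) * s) ^ 2)) ^ 2 with hg
  have hg1 : 0 < g 1 := by
    rw [hg]
    simp only [Nat.cast_one, Finset.Icc_self, Finset.sum_singleton]
    positivity
  set K : ℝ := 24 / s ^ 2 with hK
  have hKpos : 0 < K := by positivity
  obtain ⟨N, hN⟩ := exists_nat_gt ((K / g 1) ^ 2 + 1)
  have hN1 : 1 ≤ N := by
    by_contra h
    push_neg at h
    interval_cases N
    · simp at hN; nlinarith [sq_nonneg (K / g 1)]
  obtain ⟨Mstar, hmem, hmax⟩ := Finset.exists_max_image (Finset.Icc 1 N) g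
    ⟨1, Finset.mem_Icc.mpr ⟨le_refl 1, hN1⟩⟩
  obtain ⟨hM1, hMN⟩ := Finset.mem_Icc.mp hmem
  refine ⟨Mstar, hM1, ?_⟩
  intro M hM
  by_cases hcase : M ≤ N
  · exact hmax M (Finset.mem_Icc.mpr ⟨hM, hcase⟩)
  · push_neg at hcase
    have hMR : (0:ℝ) < (M:ℝ) := by exact_mod_cast hM
    have hsM : (0:ℝ) < Real.sqrt M := Real.sqrt_pos.2 hMR
    have h2 : Real.sqrt M * Real.sqrt M = (M:ℝ) := Real.mul_self_sqrt (le_of_lt hMR)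
    have hgM : g M ≤ K / Real.sqrt M := by
      have h1 := key_bound d s hd hs M hM
      have hgMdef : g M = (1 / (M : ℝ)) *
          (∑ n ∈ Finset.Icc 1 M,
            1 / Real.sqrt (d ^ 2 + (((n : ℝ) - 1 / 2) * s) ^ 2)) ^ 2 := rfl
      rw [hgMdef]
      have step : (1 / (M : ℝ)) *
          (∑ n ∈ Finset.Icc 1 M,
            1 / Real.sqrt (d ^ 2 + (((n : ℝ) - 1 / 2) * s) ^ 2)) ^ 2 ≤
          (1 / (M : ℝ)) * ((24 / s ^ 2) * Real.sqrt M) :=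
        mul_le_mul_of_nonneg_left h1 (by positivity)
      refine step.trans (le_of_eq ?_)
      rw [hK, eq_div_iff (ne_of_gt hsM)]
      field_simp
      linear_combination h2
    have hNM : Real.sqrt N ≤ Real.sqrt M := by
      apply Real.sqrt_le_sqrt; exact_mod_cast le_of_lt hcase
    have hKg : K / g 1 < Real.sqrt N := by
      have hlt2 : (K / g 1)^2 < (N:ℝ) := by linarith
      have h0 : 0 ≤ K / g 1 := le_of_lt (div_pos hKpos hg1)
      calc K / g 1 = Real.sqrt ((K / g 1)^2) := (Real.sqrt_sq h0).symm
        _ < Real.sqrt N := Real.sqrt_lt_sqrt (sq_nonneg _) hlt2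
    have hlt : K / Real.sqrt M < g 1 := by
      rw [div_lt_iff₀ hsM]
      have hKM : K / g 1 < Real.sqrt M := lt_of_lt_of_le hKg hNM
      calc K = (K / g 1) * g 1 := by field_simp
        _ < Real.sqrt M * g 1 := mul_lt_mul_of_pos_right hKM hg1
        _ = g 1 * Real.sqrt M := by ring
    have hfin := hmax 1 (Finset.mem_Icc.mpr ⟨le_refl 1, hN1⟩)
    calc g M ≤ K / Real.sqrt M := hgM
      _ ≤ g 1 := le_of_lt hlt
      _ ≤ g Mstar := hfin
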